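/- With the above notation, r·(l + m + n − 1 + √(l²+1) + √(m²+1) + √(n²+1))/(2l) = r_A·sin²σ. -/

import Mathlib

open Real

set_option maxHeartbeats 1000000 in
theorem malfatti_radius_i2_A
    (a b c : ℝ) (ha : 0 < a) (hb : 0 < b) (hc : 0 < c)
    (habc : a < b + c) (hbca : b < c + a) (hcab : c < a + b)
    (s r rA rB rC α β γ σ l m n : ℝ)
    (hs : s = (a + b + c) / 2)
    (hr : r = Real.sqrt ((s - a) * (s - b) * (s - c) / s))
    (hrA : rA = Real.sqrt (s * (s - b) * (s - c) / (s - a)))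
    (hrB : rB = Real.sqrt (s * (s - c) * (s - a) / (s - b)))
    (hrC : rC = Real.sqrt (s * (s - a) * (s - b) / (s - c)))
    (hα : α ∈ Set.Ioo 0 (π / 2)) (hβ : β ∈ Set.Ioo 0 (π / 2)) (hγ : γ ∈ Set.Ioo 0 (π / 2))
    (hsinα : Real.sin α ^ 2 = a / s)
    (hsinβ : Real.sin β ^ 2 = b / s)
    (hsinγ : Real.sin γ ^ 2 = c / s)
    (hσ : σ = (α + β + γ) / 2)
    (hl : l = (s - a) / r) (hm : m = (s - b) / r) (hn : n = (s - c) / r) :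
    r * (l + m + n - 1 + Real.sqrt (l ^ 2 + 1) + Real.sqrt (m ^ 2 + 1) + Real.sqrt (n ^ 2 + 1)) / (2 * l) = rA * Real.sin σ ^ 2 := by
  have hx : (0:ℝ) < s - a := by rw [hs]; linarith
  have hy : (0:ℝ) < s - b := by rw [hs]; linarith
  have hz : (0:ℝ) < s - c := by rw [hs]; linarith
  have hsp : (0:ℝ) < s := by rw [hs]; linarith
  set A := Real.sqrt (s - a) with hA
  set B := Real.sqrt (s - b) with hB
  set C := Real.sqrt (s - c) with hC
  set S := Real.sqrt s with hS
  set U := Real.sqrt a with hU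
  set V := Real.sqrt b with hV
  set W := Real.sqrt c with hW
  have hA2 : A ^ 2 = s - a := Real.sq_sqrt hx.le
  have hB2 : B ^ 2 = s - b := Real.sq_sqrt hy.le
  have hC2 : C ^ 2 = s - c := Real.sq_sqrt hz.le
  have hS2 : S ^ 2 = s := Real.sq_sqrt hsp.le
  have hU2 : U ^ 2 = a := Real.sq_sqrt ha.le
  have hV2 : V ^ 2 = b := Real.sq_sqrt hb.le
  have hW2 : W ^ 2 = c := Real.sq_sqrt hc.le
  have hAp : 0 < A := Real.sqrt_pos.mpr hx
  have hBp : 0 < B := Real.sqrt_pos.mpr hy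
  have hCp : 0 < C := Real.sqrt_pos.mpr hz
  have hSp : 0 < S := Real.sqrt_pos.mpr hsp
  have hUp : 0 < U := Real.sqrt_pos.mpr ha
  have hVp : 0 < V := Real.sqrt_pos.mpr hb
  have hWp : 0 < W := Real.sqrt_pos.mpr hc
  -- r and rA
  have hrval : r = A * B * C / S := by
    rw [hr, show (s - a) * (s - b) * (s - c) / s = (A * B * C / S) ^ 2 by
      rw [div_pow, mul_pow, mul_pow, hA2, hB2, hC2, hS2]]
    exact Real.sqrt_sq (by positivity)
  have hrAval : rA = S * B * C / A := by
    rw [hrA, show s * (s - b) * (s - c) / (s - a) = (S * B * C / A) ^ 2 by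
      rw [div_pow, mul_pow, mul_pow, hA2, hB2, hC2, hS2]]
    exact Real.sqrt_sq (by positivity)
  have hrp : 0 < r := by rw [hrval]; positivity
  -- l m n
  have hlval : l = A * S / (B * C) := by
    rw [hl, hrval, ← hA2]; field_simp
  have hmval : m = B * S / (A * C) := by
    rw [hm, hrval, ← hB2]; field_simp
  have hnval : n = C * S / (A * B) := by
    rw [hn, hrval, ← hC2]; field_simp
  -- square roots of l²+1 etc.
  have keyl : (s - a) * s + (s - b) * (s - c) = b * c := by rw [hs]; ring
  have keym : (s - b) * s + (s - a) * (s - c) = a * c := by rw [hs]; ring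
  have keyn : (s - c) * s + (s - a) * (s - b) = a * b := by rw [hs]; ring
  have hsqrtl : Real.sqrt (l ^ 2 + 1) = V * W / (B * C) := by
    rw [show l ^ 2 + 1 = (V * W / (B * C)) ^ 2 by
      rw [hlval]
      simp only [div_pow, mul_pow]
      rw [hA2, hB2, hC2, hS2, hV2, hW2]
      field_simp
      linear_combination keyl]
    exact Real.sqrt_sq (by positivity)
  have hsqrtm : Real.sqrt (m ^ 2 + 1) = U * W / (A * C) := by
    rw [show m ^ 2 + 1 = (U * W / (A * C)) ^ 2 by
      rw [hmval]
      simp only [div_pow, mul_pow]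
      rw [hA2, hB2, hC2, hS2, hU2, hW2]
      field_simp
      linear_combination keym]
    exact Real.sqrt_sq (by positivity)
  have hsqrtn : Real.sqrt (n ^ 2 + 1) = U * V / (A * B) := by
    rw [show n ^ 2 + 1 = (U * V / (A * B)) ^ 2 by
      rw [hnval]
      simp only [div_pow, mul_pow]
      rw [hA2, hB2, hC2, hS2, hU2, hV2]
      field_simp
      linear_combination keyn]
    exact Real.sqrt_sq (by positivity)
  -- trig values
  obtain ⟨hα1, hα2⟩ := hα
  obtain ⟨hβ1, hβ2⟩ := hβ
  obtain ⟨hγ1, hγ2⟩ := hγ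
  have pi2 : π / 2 ≤ π := by linarith [Real.pi_pos]
  have hsina : Real.sin α = U / S := by
    have h1 : 0 ≤ Real.sin α := Real.sin_nonneg_of_nonneg_of_le_pi hα1.le (by linarith)
    rw [← Real.sqrt_sq h1, hsinα, Real.sqrt_div ha.le]
  have hsinb : Real.sin β = V / S := by
    have h1 : 0 ≤ Real.sin β := Real.sin_nonneg_of_nonneg_of_le_pi hβ1.le (by linarith)
    rw [← Real.sqrt_sq h1, hsinβ, Real.sqrt_div hb.le]
  have hsinc : Real.sin γ = W / S := by
    have h1 : 0 ≤ Real.sin γ := Real.sin_nonneg_of_nonneg_of_le_pi hγ1.le (by linarith)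
    rw [← Real.sqrt_sq h1, hsinγ, Real.sqrt_div hc.le]
  have hcosa : Real.cos α = A / S := by
    have h1 : 0 ≤ Real.cos α := Real.cos_nonneg_of_mem_Icc ⟨by linarith, hα2.le⟩
    have h2 : Real.cos α ^ 2 = (s - a) / s := by
      have := Real.sin_sq_add_cos_sq α
      rw [hsinα] at this
      field_simp at this ⊢
      linarith
    rw [← Real.sqrt_sq h1, h2, Real.sqrt_div hx.le]
  have hcosb : Real.cos β = B / S := by
    have h1 : 0 ≤ Real.cos β := Real.cos_nonneg_of_mem_Icc ⟨by linarith, hβ2.le⟩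
    have h2 : Real.cos β ^ 2 = (s - b) / s := by
      have := Real.sin_sq_add_cos_sq β
      rw [hsinβ] at this
      field_simp at this ⊢
      linarith
    rw [← Real.sqrt_sq h1, h2, Real.sqrt_div hy.le]
  have hcosc : Real.cos γ = C / S := by
    have h1 : 0 ≤ Real.cos γ := Real.cos_nonneg_of_mem_Icc ⟨by linarith, hγ2.le⟩
    have h2 : Real.cos γ ^ 2 = (s - c) / s := by
      have := Real.sin_sq_add_cos_sq γ
      rw [hsinγ] at this
      field_simp at this ⊢
      linarith
    rw [← Real.sqrt_sq h1, h2, Real.sqrt_div hz.le]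
  -- sin σ squared
  have hsinsq : Real.sin σ ^ 2 = 1 / 2 - Real.cos (α + β + γ) / 2 := by
    rw [Real.sin_sq, Real.cos_sq, show 2 * σ = α + β + γ by rw [hσ]; ring]
    ring
  have hcossum : Real.cos (α + β + γ) =
      (A * B * C - A * V * W - U * B * W - U * V * C) / S ^ 3 := by
    rw [Real.cos_add, Real.cos_add, Real.sin_add, hsina, hsinb, hsinc, hcosa, hcosb, hcosc]
    field_simp
    ring
  -- key relation
  have hrel : S ^ 2 = A ^ 2 + B ^ 2 + C ^ 2 := by
    rw [hA2, hB2, hC2, hS2, hs]; ring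
  -- final computation
  rw [hsinsq, hcossum, hrval, hrAval, hsqrtl, hsqrtm, hsqrtn, hlval, hmval, hnval]
  field_simp
  ring_nf
  linear_combination (-S) * hrel
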